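/- Lower Bound on Price of Frugality via an Additive Instance: For every integer n ≥ 1 and all budgets 0 < b < B ≤ 1, let M = min(⌈2B/b⌉ − 1, n). There exists a multi-agent contract instance with n agents and additive f such that p({i}) ≤ b for every agent i ∈ A, and Max-Reward(B) = M · Max-Reward(b) and Max-Welfare(B) = M · Max-Welfare(b). -/

import Mathlib

open scoped BigOperators ENNReal
open Finset

/-- Marginal contribution of agent `i` to set `S`: `f_S(i) = f(S) - f(S \ {i})`. -/
noncomputable def marginal {α : Type*} [DecidableEq α] (f : Finset α → ℝ) (S : Finset α)
    (i : α) : ℝ :=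
  f S - f (S.erase i)

/-- Payment needed to incentivize `S`, valued in `[0,∞]`, with the conventions
`0/0 = 0` and `x/0 = ∞` for `x > 0` (these hold for ENNReal division). -/
noncomputable def payment {α : Type*} [DecidableEq α] (f : Finset α → ℝ) (c : α → ℝ)
    (S : Finset α) : ℝ≥0∞ :=
  ∑ i ∈ S, ENNReal.ofReal (c i) / ENNReal.ofReal (marginal f S i)

/-- The principal's profit from incentivizing `S`: `g(S) = (1 - p(S)) · f(S)`. -/
noncomputable def profit {α : Type*} [DecidableEq α] (f : Finset α → ℝ) (c : α → ℝ)
    (S : Finset α) : ℝ :=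
  (1 - (payment f c S).toReal) * f S

/-- `f` is monotone. -/
def IsMonotoneFn {α : Type*} (f : Finset α → ℝ) : Prop :=
  ∀ ⦃S T : Finset α⦄, S ⊆ T → f S ≤ f T

/-- `f` is subadditive. -/
def IsSubadditive {α : Type*} [DecidableEq α] (f : Finset α → ℝ) : Prop :=
  ∀ S T : Finset α, f (S ∪ T) ≤ f S + f T

/-- `f` is submodular (decreasing marginal values). -/
def IsSubmodular {α : Type*} [DecidableEq α] (f : Finset α → ℝ) : Prop :=
  ∀ ⦃S T : Finset α⦄, S ⊆ T → ∀ i ∉ T, f (insert i T) - f T ≤ f (insert i S) - f S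

/-- `f` is additive. -/
def IsAdditive {α : Type*} [DecidableEq α] (f : Finset α → ℝ) : Prop :=
  ∀ S : Finset α, f S = ∑ i ∈ S, f {i}

/-- `f` is XOS: a finite max of nonnegative additive functions. -/
def IsXOS {α : Type*} (f : Finset α → ℝ) : Prop :=
  ∃ (k : ℕ) (a : Fin (k + 1) → α → ℝ),
    (∀ j i, 0 ≤ a j i) ∧
    ∀ S : Finset α, f S = Finset.univ.sup' Finset.univ_nonempty (fun j => ∑ i ∈ S, a j i)

/-- Agent `i` is light: it can be incentivized with payment at most `1/2`. -/
def isLight {α : Type*} [DecidableEq α] (f : Finset α → ℝ) (c : α → ℝ) (i : α) : Prop :=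
  payment f c {i} ≤ ENNReal.ofReal (1 / 2)

/-- `S` is budget-feasible for budget `B`. -/
def feasible {α : Type*} [DecidableEq α] (f : Finset α → ℝ) (c : α → ℝ) (B : ℝ)
    (S : Finset α) : Prop :=
  payment f c S ≤ ENNReal.ofReal B

/-- `S` is a budget-feasible set of light agents. -/
def feasibleLight {α : Type*} [DecidableEq α] (f : Finset α → ℝ) (c : α → ℝ) (B : ℝ)
    (S : Finset α) : Prop :=
  (∀ i ∈ S, isLight f c i) ∧ payment f c S ≤ ENNReal.ofReal B

/-- The maximum (supremum) value of objective `φ` over sets satisfying `P`. -/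
noncomputable def maxVal {α : Type*} (φ : Finset α → ℝ) (P : Finset α → Prop) : ℝ :=
  sSup (φ '' {S | P S})

/-- `φ` is a BEST objective for the instance `(f, c)`: it is nonnegative, sandwiched between
profit and reward, and satisfies `φ(S) ≤ f(S \ {i}) + φ({i})` for `i ∈ S`. -/
def IsBEST {α : Type*} [DecidableEq α] (f : Finset α → ℝ) (c : α → ℝ)
    (φ : Finset α → ℝ) : Prop :=
  (∀ S, 0 ≤ φ S) ∧
  (∀ S, φ S ≤ f S) ∧
  (∀ S, payment f c S ≤ 1 → (1 - (payment f c S).toReal) * f S ≤ φ S) ∧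
  (∀ S, ∀ i ∈ S, φ S ≤ f (S.erase i) + φ {i})

/-- `φ` is a BEST objective for the instance `(f, c)` restricted to sets satisfying `P`. -/
def IsBESTOn {α : Type*} [DecidableEq α] (f : Finset α → ℝ) (c : α → ℝ)
    (P : Finset α → Prop) (φ : Finset α → ℝ) : Prop :=
  (∀ S, P S → 0 ≤ φ S) ∧
  (∀ S, P S → φ S ≤ f S) ∧
  (∀ S, P S → payment f c S ≤ 1 → (1 - (payment f c S).toReal) * f S ≤ φ S) ∧
  (∀ S, P S → ∀ i ∈ S, φ S ≤ f (S.erase i) + φ {i})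

/-- **Lower Bound on Price of Frugality via an Additive Instance.** -/
theorem pof_lower_additive (n : ℕ) (hn : 1 ≤ n) (b B : ℝ)
    (hb : 0 < b) (hbB : b < B) (hB : B ≤ 1) :
    ∃ (f : Finset (Fin n) → ℝ) (c : Fin n → ℝ),
      (∀ S, f S ∈ Set.Icc (0 : ℝ) 1) ∧ f ∅ = 0 ∧ IsAdditive f ∧ (∀ i, 0 ≤ c i) ∧
      (∀ i, payment f c {i} ≤ ENNReal.ofReal b) ∧
      maxVal f (feasible f c B)
        = ((min (⌈2 * B / b⌉ - 1) (n : ℤ) : ℤ) : ℝ) * maxVal f (feasible f c b) ∧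
      maxVal (fun S => f S - ∑ i ∈ S, c i) (feasible f c B)
        = ((min (⌈2 * B / b⌉ - 1) (n : ℤ) : ℤ) : ℝ) *
            maxVal (fun S => f S - ∑ i ∈ S, c i) (feasible f c b) := by

  have hB0 : 0 < B := hb.trans hbB
  have hn0 : (0:ℝ) < n := by exact_mod_cast hn
  set Mz : ℤ := min (⌈2 * B / b⌉ - 1) (n : ℤ) with hMzdef
  have hceil : (2:ℤ) < ⌈2 * B / b⌉ := by
    rw [Int.lt_ceil]
    push_cast
    rw [lt_div_iff₀ hb]
    linarith
  have hMz1 : 1 ≤ Mz := le_min (by omega) (by exact_mod_cast hn)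
  set M : ℕ := Mz.toNat with hMdef
  have hM1 : 1 ≤ M := by omega
  have hMn : M ≤ n := by
    have := min_le_right (⌈2 * B / b⌉ - 1) (n : ℤ)
    omega
  have hMR : ((M : ℕ) : ℝ) = ((Mz : ℤ) : ℝ) := by
    exact_mod_cast (by omega : ((M : ℕ) : ℤ) = Mz)
  have hM0 : (0:ℝ) < M := by exact_mod_cast hM1
  have hMlt : (M:ℝ) < 2 * B / b := by
    have h1 : (Mz:ℝ) ≤ ((⌈2*B/b⌉ - 1 : ℤ) : ℝ) := by
      exact_mod_cast min_le_left (⌈2 * B / b⌉ - 1) (n : ℤ)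
    have h2 : ((⌈2*B/b⌉ : ℤ):ℝ) < 2*B/b + 1 := Int.ceil_lt_add_one _
    rw [hMR]
    push_cast at h1 ⊢
    linarith
  set r : ℝ := min b (B / M) with hrdef
  have hr0 : 0 < r := lt_min hb (div_pos hB0 hM0)
  have hrb : r ≤ b := min_le_left _ _
  have hbr : b < 2 * r := by
    have h1 : b/2 < B/M := by
      rw [div_lt_div_iff₀ (by norm_num) hM0]
      have := (lt_div_iff₀ hb).mp hMlt
      linarith
    have := lt_min (half_lt_self hb) h1
    rw [← hrdef] at this
    linarith
  have hr1 : r < 1 := lt_of_le_of_lt hrb (lt_of_lt_of_le hbB hB)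
  have hMrB : (M:ℝ) * r ≤ B := by
    calc (M:ℝ) * r ≤ (M:ℝ) * (B/M) :=
          mul_le_mul_of_nonneg_left (min_le_right _ _) hM0.le
      _ = B := by field_simp
  have hkey : ∀ k : ℕ, k ≤ n → (k:ℝ) * r ≤ B → k ≤ M := by
    intro k hkn hkr
    by_contra hk
    push_neg at hk
    have hMk : (M:ℝ) + 1 ≤ k := by exact_mod_cast hk
    rcases min_choice (⌈2 * B / b⌉ - 1) (n : ℤ) with h | h
    · rw [← hMzdef] at h
      have hM1c : (M:ℝ) + 1 = ((⌈2*B/b⌉ : ℤ) : ℝ) := by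
        rw [hMR, h]; push_cast; ring
      have h2B : 2 * B ≤ ((M:ℝ) + 1) * b := by
        rw [hM1c]
        have h3 := Int.le_ceil (2*B/b)
        rw [div_le_iff₀ hb] at h3
        linarith
      have hr2 : B < ((M:ℝ) + 1) * r := by
        rcases min_choice b (B / M) with he | he <;> rw [← hrdef] at he <;> rw [he]
        · nlinarith
        · have h4 : ((M:ℝ) + 1) * (B / M) = B + B / M := by field_simp
          rw [h4]
          have := div_pos hB0 hM0
          linarith
      have : B < (k:ℝ) * r := lt_of_lt_of_le hr2 (mul_le_mul_of_nonneg_right hMk hr0.le)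
      linarith
    · rw [← hMzdef] at h
      have : M = n := by omega
      omega
  have hkey_b : ∀ k : ℕ, k ≤ n → (k:ℝ) * r ≤ b → k ≤ 1 := by
    intro k _ hkr
    by_contra hk
    push_neg at hk
    have h2 : (2:ℝ) ≤ k := by exact_mod_cast hk
    nlinarith
  set f : Finset (Fin n) → ℝ := fun S => (S.card : ℝ) / n with hf
  set c : Fin n → ℝ := fun _ => r / n with hc
  have hcard : ∀ S : Finset (Fin n), S.card ≤ n := fun S => by
    simpa using Finset.card_le_univ S
  have hmarg : ∀ S : Finset (Fin n), ∀ i ∈ S, marginal f S i = 1 / n := by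
    intro S i hi
    have h1 : 1 ≤ S.card := Finset.card_pos.mpr ⟨i, hi⟩
    simp only [marginal, hf, Finset.card_erase_of_mem hi]
    rw [Nat.cast_sub h1]
    push_cast
    field_simp
    ring
  have hpay : ∀ S : Finset (Fin n), payment f c S = (S.card : ℝ≥0∞) * ENNReal.ofReal r := by
    intro S
    unfold payment
    have hterm : ∀ i ∈ S,
        ENNReal.ofReal (c i) / ENNReal.ofReal (marginal f S i) = ENNReal.ofReal r := by
      intro i hi
      rw [hmarg S i hi]
      simp only [hc]
      rw [← ENNReal.ofReal_div_of_pos (by positivity : (0:ℝ) < 1 / n)]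
      congr 1
      field_simp
    rw [Finset.sum_congr rfl hterm, Finset.sum_const, nsmul_eq_mul]
  have hfea : ∀ (β : ℝ), 0 < β → ∀ S : Finset (Fin n),
      feasible f c β S ↔ (S.card : ℝ) * r ≤ β := by
    intro β hβ S
    unfold feasible
    rw [hpay, ← ENNReal.ofReal_natCast, ← ENNReal.ofReal_mul (by positivity)]
    exact ENNReal.ofReal_le_ofReal_iff hβ.le
  have hmax : ∀ (φ : Finset (Fin n) → ℝ) (w β : ℝ) (K : ℕ),
      (∀ S, φ S = (S.card : ℝ) * w) → 0 ≤ w → 0 < β → K ≤ n → (K:ℝ) * r ≤ β →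
      (∀ k : ℕ, k ≤ n → (k:ℝ) * r ≤ β → k ≤ K) →
      maxVal φ (feasible f c β) = (K:ℝ) * w := by
    intro φ w β K hφ hw hβ hKn hKr hKmax
    apply IsGreatest.csSup_eq
    constructor
    · obtain ⟨S, _, hScard⟩ := Finset.exists_subset_card_eq
        (show K ≤ (Finset.univ : Finset (Fin n)).card by simpa using hKn)
      refine ⟨S, ?_, by rw [hφ, hScard]⟩
      rw [Set.mem_setOf_eq, hfea β hβ S, hScard]
      exact hKr
    · rintro x ⟨S, hS, rfl⟩
      rw [Set.mem_setOf_eq, hfea β hβ S] at hS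
      have hSK : (S.card : ℝ) ≤ K := by exact_mod_cast hKmax S.card (hcard S) hS
      rw [hφ]
      exact mul_le_mul_of_nonneg_right hSK hw
  have hfeq : ∀ S : Finset (Fin n), f S = (S.card : ℝ) * (1 / n) := by
    intro S; simp only [hf]; ring
  have hweq : ∀ S : Finset (Fin n), f S - ∑ i ∈ S, c i = (S.card : ℝ) * ((1 - r) / n) := by
    intro S
    simp only [hf, hc, Finset.sum_const, nsmul_eq_mul]
    field_simp
  have hw0 : (0:ℝ) ≤ (1 - r) / n := div_nonneg (by linarith) hn0.le
  have h1n : (0:ℝ) ≤ 1 / n := by positivity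
  refine ⟨f, c, ?_, ?_, ?_, ?_, ?_, ?_, ?_⟩
  · intro S
    simp only [hf, Set.mem_Icc]
    constructor
    · positivity
    · rw [div_le_one hn0]
      exact_mod_cast hcard S
  · simp [hf]
  · intro S
    simp only [hf, Finset.card_singleton, Nat.cast_one, Finset.sum_const, nsmul_eq_mul]
    ring
  · intro i
    simp only [hc]
    positivity
  · intro i
    rw [hpay]
    simp only [Finset.card_singleton, Nat.cast_one, one_mul]
    exact ENNReal.ofReal_le_ofReal hrb
  · rw [hmax f (1/n) B M hfeq h1n hB0 hMn hMrB hkey,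
      hmax f (1/n) b 1 hfeq h1n hb hn (by rw [Nat.cast_one, one_mul]; exact hrb) hkey_b,
      ← hMR]
    push_cast
    ring
  · rw [hmax _ ((1-r)/n) B M hweq hw0 hB0 hMn hMrB hkey,
      hmax _ ((1-r)/n) b 1 hweq hw0 hb hn (by rw [Nat.cast_one, one_mul]; exact hrb) hkey_b,
      ← hMR]
    push_cast
    ring
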